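/- arXiv:math/0009233 — 3 statements merged into one kernel-verified Lean document; each statement's English description precedes it below -/
import Mathlib

section
/- Let R be a commutative ring and α, β ∈ R. In the cubic Hecke algebra H(Q,n) over R, for every j with 1 ≤ j ≤ n−2 one has the identity b_{j+1}² b_j² b_{j+1} = b_j b_{j+1}² b_j² + α·(b_{j+1} b_j² b_{j+1} − b_j b_{j+1}² b_j) + β·(b_j² b_{j+1} − b_j b_{j+1}²). -/
def braidRels (m : ℕ) : Set (FreeGroup (Fin m)) :=
  { r | (∃ i j : Fin m, (i : ℕ) + 1 < (j : ℕ) ∧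
          r = FreeGroup.of i * FreeGroup.of j * (FreeGroup.of i)⁻¹ * (FreeGroup.of j)⁻¹) ∨
        (∃ i j : Fin m, (j : ℕ) = (i : ℕ) + 1 ∧
          r = FreeGroup.of i * FreeGroup.of j * FreeGroup.of i *
              (FreeGroup.of j * FreeGroup.of i * FreeGroup.of j)⁻¹) }

abbrev BraidGroup (n : ℕ) := PresentedGroup (braidRels (n - 1))

def braidGen (n : ℕ) (i : Fin (n - 1)) : BraidGroup n := PresentedGroup.of i

theorem braid_mk_eq_one {m : ℕ} {r : FreeGroup (Fin m)} (hr : r ∈ braidRels m) :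
    PresentedGroup.mk (braidRels m) r = 1 :=
  (QuotientGroup.eq_one_iff r).mpr (Subgroup.subset_normalClosure hr)

noncomputable def braidIncl (n : ℕ) : BraidGroup n →* BraidGroup (n + 1) :=
  PresentedGroup.toGroup
    (f := fun i => braidGen (n + 1) (Fin.castLE (by omega : n - 1 ≤ n + 1 - 1) i))
    (by
      rintro r (⟨i, j, hij, rfl⟩ | ⟨i, j, hij, rfl⟩)
      · have h1 := braid_mk_eq_one (m := n + 1 - 1)
          (Or.inl ⟨Fin.castLE (by omega) i, Fin.castLE (by omega) j, by simpa using hij, rfl⟩)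
        simp only [map_mul, map_inv, FreeGroup.lift_apply_of] at h1 ⊢
        exact h1
      · have h1 := braid_mk_eq_one (m := n + 1 - 1)
          (Or.inr ⟨Fin.castLE (by omega) i, Fin.castLE (by omega) j, by simpa using hij, rfl⟩)
        simp only [map_mul, map_inv, FreeGroup.lift_apply_of] at h1 ⊢
        exact h1)

theorem braidIncl_gen (n : ℕ) (i : Fin (n - 1)) :
    braidIncl n (braidGen n i) = braidGen (n + 1) (Fin.castLE (by omega) i) :=
  PresentedGroup.toGroup.of _

variable (R : Type) [CommRing R]

noncomputable def gb (n : ℕ) (i : Fin (n - 1)) : MonoidAlgebra R (BraidGroup n) :=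
  MonoidAlgebra.of R (BraidGroup n) (braidGen n i)

inductive cubicRel (α β : R) (n : ℕ) :
    MonoidAlgebra R (BraidGroup n) → MonoidAlgebra R (BraidGroup n) → Prop
  | cube (i : Fin (n - 1)) :
      cubicRel α β n (gb R n i ^ 3) (α • gb R n i ^ 2 + β • gb R n i + 1)

abbrev CubicHecke (α β : R) (n : ℕ) := RingQuot (cubicRel R α β n)

noncomputable def hb (α β : R) (n : ℕ) (i : Fin (n - 1)) : CubicHecke R α β n :=
  RingQuot.mkAlgHom R (cubicRel R α β n) (gb R n i)

theorem mapDomain_gb (n : ℕ) (i : Fin (n - 1)) :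
    (MonoidAlgebra.mapDomainAlgHom R R (braidIncl n)) (gb R n i)
      = gb R (n + 1) (Fin.castLE (by omega) i) := by
  simp only [gb, MonoidAlgebra.mapDomainAlgHom_apply, MonoidAlgebra.of_apply,
    MonoidAlgebra.mapDomain_single, braidIncl_gen]

noncomputable def heckeIncl (α β : R) (n : ℕ) :
    CubicHecke R α β n →ₐ[R] CubicHecke R α β (n + 1) :=
  RingQuot.liftAlgHom R
    ⟨(RingQuot.mkAlgHom R (cubicRel R α β (n + 1))).comp
        (MonoidAlgebra.mapDomainAlgHom R R (braidIncl n)),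
      by
        rintro x y ⟨i⟩
        have h2 : (MonoidAlgebra.mapDomainAlgHom R R (braidIncl n)) (gb R n i ^ 3)
            = gb R (n + 1) (Fin.castLE (by omega) i) ^ 3 := by
          rw [map_pow, mapDomain_gb]
        have h3 : (MonoidAlgebra.mapDomainAlgHom R R (braidIncl n))
              (α • gb R n i ^ 2 + β • gb R n i + 1)
            = α • gb R (n + 1) (Fin.castLE (by omega) i) ^ 2
              + β • gb R (n + 1) (Fin.castLE (by omega) i) + 1 := by
          rw [map_add, map_add, map_smul, map_smul, map_pow, map_one, mapDomain_gb]
        simp only [AlgHom.comp_apply, h2, h3]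
        exact RingQuot.mkAlgHom_rel R (cubicRel.cube _)⟩

theorem heckeIncl_gen (α β : R) (n : ℕ) (i : Fin (n - 1)) :
    heckeIncl R α β n (hb R α β n i) = hb R α β (n + 1) (Fin.castLE (by omega) i) := by
  simp only [heckeIncl, hb, RingQuot.liftAlgHom_mkAlgHom_apply, AlgHom.comp_apply, mapDomain_gb]

noncomputable def R0elt {A : Type*} [Ring A] [Algebra R A] (α β : R) (x y : A) : A :=
  y * x ^ 2 * y
  + (β ^ 2 - α) • (x ^ 2 * y ^ 2 * x ^ 2)
  + (α ^ 2 - α * β ^ 2 - β) • (x * y ^ 2 * x ^ 2 + x ^ 2 * y ^ 2 * x)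
  + (α ^ 2 - α * β ^ 2) • (x ^ 2 * y * x ^ 2)
  + (1 + 2 * α * β + α ^ 2 * β ^ 2 - α ^ 3) • (x * y ^ 2 * x)
  + (1 + α * β + α ^ 2 * β ^ 2 - α ^ 3) • (x * y * x ^ 2 + x ^ 2 * y * x)
  + (1 + 2 * α * β - β ^ 3) • (y ^ 2 * x ^ 2 + x ^ 2 * y ^ 2)
  + (α * β ^ 3 - 2 * α - 2 * α ^ 2 * β) • (y * x ^ 2 + x ^ 2 * y)
  + (α * β ^ 3 - 2 * α - 2 * α ^ 2 * β + β ^ 2) • (y ^ 2 * x + x * y ^ 2)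
  + (α ^ 4 - α ^ 3 * β ^ 2 - 2 * α ^ 2 * β - 3 * α) • (x * y * x)
  + (2 * α ^ 3 * β + 3 * α ^ 2 - α ^ 2 * β ^ 3 - α * β ^ 2) • (y * x + x * y)
  + (β ^ 4 - 2 * β - 3 * α * β ^ 2 + α ^ 2) • (x ^ 2 + y ^ 2)
  + (1 + 4 * α * β + 3 * α ^ 2 * β ^ 2 - α ^ 3 - α * β ^ 4 - β ^ 3) • x
  + (1 + 3 * α * β + 3 * α ^ 2 * β ^ 2 - α ^ 3 - α * β ^ 4) • y
  + algebraMap R A (3 * β ^ 2 - β ^ 5 - 2 * α - 3 * α ^ 2 * β + 4 * α * β ^ 3)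

theorem map_R0elt {A B : Type*} [Ring A] [Ring B] [Algebra R A] [Algebra R B]
    (f : A →ₐ[R] B) (α β : R) (x y : A) :
    f (R0elt R α β x y) = R0elt R α β (f x) (f y) := by
  simp only [R0elt, map_add, map_mul, map_pow, map_smul, AlgHom.commutes]

inductive KRel (α β : R) (n : ℕ) : CubicHecke R α β n → CubicHecke R α β n → Prop
  | r0 (j : Fin (n - 1)) (h : (j : ℕ) + 1 < n - 1) :
      KRel α β n (R0elt R α β (hb R α β n j) (hb R α β n ⟨(j : ℕ) + 1, h⟩)) 0

abbrev KAlg (α β : R) (n : ℕ) := RingQuot (KRel R α β n)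

noncomputable def towerIncl (α β : R) (n : ℕ) :
    KAlg R α β n →ₐ[R] KAlg R α β (n + 1) :=
  RingQuot.liftAlgHom R
    ⟨(RingQuot.mkAlgHom R (KRel R α β (n + 1))).comp (heckeIncl R α β n),
      by
        rintro x y ⟨j, h⟩
        have hle : n - 1 ≤ n + 1 - 1 := by omega
        have hlt : ((Fin.castLE hle j : Fin (n + 1 - 1)) : ℕ) + 1 < n + 1 - 1 := by
          simp only [Fin.coe_castLE]; omega
        have e3 : Fin.castLE hle ⟨(j : ℕ) + 1, h⟩
            = (⟨((Fin.castLE hle j : Fin (n + 1 - 1)) : ℕ) + 1, hlt⟩ : Fin (n + 1 - 1)) := by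
          ext; simp
        rw [AlgHom.comp_apply, AlgHom.comp_apply, map_R0elt R (heckeIncl R α β n),
          heckeIncl_gen, heckeIncl_gen, e3, map_zero (heckeIncl R α β n)]
        exact RingQuot.mkAlgHom_rel R (KRel.r0 (Fin.castLE hle j) hlt)⟩

/-- The class of the inverse `b_{i+1}⁻¹` in the cubic Hecke algebra. -/
noncomputable def hbInv (α β : R) (n : ℕ) (i : Fin (n - 1)) : CubicHecke R α β n :=
  RingQuot.mkAlgHom R (cubicRel R α β n)
    (MonoidAlgebra.of R (BraidGroup n) (braidGen n i)⁻¹)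

/-- The class of the generator `b_{i+1}` in `K_n(α,β)`. -/
noncomputable def kb (α β : R) (n : ℕ) (i : Fin (n - 1)) : KAlg R α β n :=
  RingQuot.mkAlgHom R (KRel R α β n) (hb R α β n i)

/-- The class of `b_{i+1}⁻¹` in `K_n(α,β)`. -/
noncomputable def kbInv (α β : R) (n : ℕ) (i : Fin (n - 1)) : KAlg R α β n :=
  RingQuot.mkAlgHom R (KRel R α β n) (hbInv R α β n i)

/-- The iterated tower map `K_n(α,β) → K_{n+k}(α,β)`. -/
noncomputable def towerInclMany (α β : R) (n : ℕ) :
    (k : ℕ) → (KAlg R α β n →ₐ[R] KAlg R α β (n + k))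
  | 0 => AlgHom.id R _
  | k + 1 => (towerIncl R α β (n + k)).comp (towerInclMany α β n k)

/-- The class of the generator `b_n` in `K_{n+1}(α,β)` (for `n ≥ 1`). -/
noncomputable def lastGen (α β : R) (n : ℕ) (h : 1 ≤ n) : KAlg R α β (n + 1) :=
  kb R α β (n + 1) ⟨n - 1, by omega⟩

/-- The class of `b_n⁻¹` in `K_{n+1}(α,β)` (for `n ≥ 1`). -/
noncomputable def lastGenInv (α β : R) (n : ℕ) (h : 1 ≤ n) : KAlg R α β (n + 1) :=
  kbInv R α β (n + 1) ⟨n - 1, by omega⟩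

/-- An admissible functional with parameters `(z, z̄)` on the tower of the algebras
`K_n(α,β)`: a compatible family of `R`-linear functionals satisfying the Markov-type
conditions for the last generator and its inverse. -/
structure AdmissibleFunctional (α β z zbar : R) : Type _ where
  T : ∀ n : ℕ, KAlg R α β n →ₗ[R] R
  compat : ∀ (n : ℕ) (x : KAlg R α β n), T (n + 1) (towerIncl R α β n x) = T n x
  cond_z : ∀ (n : ℕ) (h : 1 ≤ n) (x y : KAlg R α β n),
      T (n + 1) (towerIncl R α β n x * lastGen R α β n h * towerIncl R α β n y)
        = z * T n (x * y)
  cond_zbar : ∀ (n : ℕ) (h : 1 ≤ n) (x y : KAlg R α β n),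
      T (n + 1) (towerIncl R α β n x * lastGenInv R α β n h * towerIncl R α β n y)
        = zbar * T n (x * y)

/-- A Markov trace is an admissible functional each of whose components is a trace. -/
def AdmissibleFunctional.IsMarkov {α β z zbar : R}
    (T : AdmissibleFunctional R α β z zbar) : Prop :=
  ∀ (n : ℕ) (a b : KAlg R α β n), T.T n (a * b) = T.T n (b * a)

/-- A normalized functional takes the value `1` on the unit of `K₁(α,β)`. -/
def AdmissibleFunctional.IsNormalized {α β z zbar : R}
    (T : AdmissibleFunctional R α β z zbar) : Prop :=
  T.T 1 1 = 1

-- braid relation in the group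
theorem braid_gen_rel (n : ℕ) (j : Fin (n - 1)) (h : (j : ℕ) + 1 < n - 1) :
    braidGen n j * braidGen n ⟨(j : ℕ) + 1, h⟩ * braidGen n j
      = braidGen n ⟨(j : ℕ) + 1, h⟩ * braidGen n j * braidGen n ⟨(j : ℕ) + 1, h⟩ := by
  have h1 := braid_mk_eq_one (m := n - 1)
    (Or.inr ⟨j, ⟨(j : ℕ) + 1, h⟩, rfl, rfl⟩)
  simp only [map_mul, map_inv] at h1
  rw [mul_inv_eq_one] at h1
  exact h1


/-- In the cubic Hecke algebra `H(Q_{α,β},n)` one has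
`b_{j+1}² b_j² b_{j+1} = b_j b_{j+1}² b_j² + α(b_{j+1} b_j² b_{j+1} − b_j b_{j+1}² b_j)
 + β(b_j² b_{j+1} − b_j b_{j+1}²)`. -/
theorem statement_2 (R : Type) [CommRing R] (α β : R) (n : ℕ)
    (j : Fin (n - 1)) (h : (j : ℕ) + 1 < n - 1) :
    hb R α β n ⟨(j : ℕ) + 1, h⟩ ^ 2 * hb R α β n j ^ 2 * hb R α β n ⟨(j : ℕ) + 1, h⟩
      = hb R α β n j * hb R α β n ⟨(j : ℕ) + 1, h⟩ ^ 2 * hb R α β n j ^ 2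
        + α • (hb R α β n ⟨(j : ℕ) + 1, h⟩ * hb R α β n j ^ 2 * hb R α β n ⟨(j : ℕ) + 1, h⟩
            - hb R α β n j * hb R α β n ⟨(j : ℕ) + 1, h⟩ ^ 2 * hb R α β n j)
        + β • (hb R α β n j ^ 2 * hb R α β n ⟨(j : ℕ) + 1, h⟩
            - hb R α β n j * hb R α β n ⟨(j : ℕ) + 1, h⟩ ^ 2) := by
  set X := hb R α β n j with hX
  set Y := hb R α β n ⟨(j : ℕ) + 1, h⟩ with hY
  set XI : CubicHecke R α β n :=
    RingQuot.mkAlgHom R (cubicRel R α β n)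
      (MonoidAlgebra.of R (BraidGroup n) (braidGen n j)⁻¹) with hXI
  -- X * XI = 1 etc.
  have hxXI : X * XI = 1 := by
    rw [hX, hXI, hb, gb, ← map_mul, ← map_mul, mul_inv_cancel, map_one, map_one]
  -- braid relation in the algebra
  have hbr : Y * (X * Y) = X * (Y * X) := by
    have := braid_gen_rel n j h
    rw [hY, hX, hb, hb, gb, gb, ← map_mul, ← map_mul, ← map_mul, ← map_mul,
      ← map_mul, ← map_mul, ← map_mul, ← map_mul]
    rw [mul_assoc, mul_assoc] at this
    rw [← this]
  have hbrw : ∀ t : CubicHecke R α β n, Y * (X * (Y * t)) = X * (Y * (X * t)) := by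
    intro t
    have h2 := congrArg (· * t) hbr
    simpa [mul_assoc] using h2
  -- cubic relation
  have hx3 : X * (X * X) = α • (X * X) + β • X + 1 := by
    have := RingQuot.mkAlgHom_rel R (cubicRel.cube (R := R) (α := α) (β := β) j)
    simp only [map_add, map_smul, map_pow, map_one] at this
    rw [hX, hb]
    rw [← mul_assoc]
    rw [pow_succ, pow_two] at this
    exact this
  -- XI = X*X - α•X - β•1
  have h4 := congrArg (· * XI) hx3
  simp only [add_mul, smul_mul_assoc, one_mul, mul_assoc, hxXI, mul_one] at h4
  have hXIeq : XI = X*X - α • X - β • (1 : CubicHecke R α β n) := by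
    rw [h4]; abel
  have key1 : Y*(Y*(X*(X*(Y*X)))) = X*(Y*(X*(X*(X*Y)))) := by
    rw [← hbr, hbrw]
    conv_rhs => rw [← hbrw]
  have key2 : X*(Y*(X*(X*Y))) = Y*(X*(X*(Y*X))) := by
    conv_lhs => rw [← hbrw, hbr]
  have key3 : X*(Y*(X*Y)) = X*(X*(Y*X)) := by rw [hbr]
  have t1 : X*(Y*(X*(X*Y)))*XI = Y*(X*(X*Y)) := by
    rw [key2]; simp [mul_assoc, hxXI]
  have t2 : X*(Y*(X*Y))*XI = X*(X*Y) := by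
    rw [key3]; simp [mul_assoc, hxXI]
  have t3 : X*(Y*Y)*XI = X*(Y*(Y*(X*X))) - α•(X*(Y*(Y*X))) - β•(X*(Y*Y)) := by
    rw [hXIeq]; simp [mul_sub, mul_smul_comm, mul_assoc, mul_one]
  have e0 : Y^2*X^2*Y = Y*(Y*(X*(X*(Y*X))))*XI := by
    have h1 : Y*(Y*(X*(X*(Y*X))))*XI = Y^2*X^2*(Y*(X*XI)) := by
      simp [pow_two, mul_assoc]
    rw [h1, hxXI, mul_one, mul_assoc]
  have e2 : X*(Y*(X*(X*(X*Y))))*XI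
      = α•(X*(Y*(X*(X*Y)))*XI) + β•(X*(Y*(X*Y))*XI) + X*(Y*Y)*XI := by
    have h2 : X*(Y*(X*(X*(X*Y)))) = X*(Y*((X*(X*X))*Y)) := by simp [mul_assoc]
    rw [h2, hx3]
    simp only [add_mul, smul_mul_assoc, one_mul, mul_add, mul_smul_comm, mul_assoc]
  have main : Y^2*X^2*Y
      = α•(Y*(X*(X*Y))) + β•(X*(X*Y))
        + (X*(Y*(Y*(X*X))) - α•(X*(Y*(Y*X))) - β•(X*(Y*Y))) := by
    rw [e0, key1, e2, t1, t2, t3]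
  rw [main]
  simp only [pow_two, smul_sub, mul_assoc]
  abel
end

section
/- Let R be a commutative ring and α, β ∈ R. In the cubic Hecke algebra H(Q,n) over R, for every j with 1 ≤ j ≤ n−2 one has the identity b_{j+1} b_j² b_{j+1}² = b_j² b_{j+1}² b_j + α·(b_{j+1} b_j² b_{j+1} − b_j b_{j+1}² b_j) + β·(b_{j+1} b_j² − b_{j+1}² b_j). -/
variable (R : Type) [CommRing R]

theorem braid_rel (n : ℕ) (i j : Fin (n - 1)) (hij : (j : ℕ) = (i : ℕ) + 1) :
    braidGen n i * braidGen n j * braidGen n i = braidGen n j * braidGen n i * braidGen n j := by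
  have h1 := braid_mk_eq_one (m := n - 1) (Or.inr ⟨i, j, hij, rfl⟩)
  simp only [map_mul, map_inv] at h1
  rw [mul_inv_eq_one] at h1
  exact h1

theorem hb_cubic (α β : R) (n : ℕ) (i : Fin (n - 1)) :
    hb R α β n i ^ 3 = α • hb R α β n i ^ 2 + β • hb R α β n i + 1 := by
  have h := RingQuot.mkAlgHom_rel R (cubicRel.cube (α := α) (β := β) i)
  simpa only [map_add, map_smul, map_pow, map_one, hb] using h

theorem hb_braid (α β : R) (n : ℕ) (i j : Fin (n - 1)) (hij : (j : ℕ) = (i : ℕ) + 1) :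
    hb R α β n i * hb R α β n j * hb R α β n i
      = hb R α β n j * hb R α β n i * hb R α β n j := by
  have h := braid_rel n i j hij
  have h2 : gb R n i * gb R n j * gb R n i = gb R n j * gb R n i * gb R n j := by
    simp only [gb, ← map_mul, h]
  simp only [hb, ← map_mul, h2]

/-- In the cubic Hecke algebra `H(Q_{α,β},n)` one has
`b_{j+1} b_j² b_{j+1}² = b_j² b_{j+1}² b_j + α(b_{j+1} b_j² b_{j+1} − b_j b_{j+1}² b_j)
 + β(b_{j+1} b_j² − b_{j+1}² b_j)`. -/
theorem statement_3 (R : Type) [CommRing R] (α β : R) (n : ℕ)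
    (j : Fin (n - 1)) (h : (j : ℕ) + 1 < n - 1) :
    hb R α β n ⟨(j : ℕ) + 1, h⟩ * hb R α β n j ^ 2 * hb R α β n ⟨(j : ℕ) + 1, h⟩ ^ 2
      = hb R α β n j ^ 2 * hb R α β n ⟨(j : ℕ) + 1, h⟩ ^ 2 * hb R α β n j
        + α • (hb R α β n ⟨(j : ℕ) + 1, h⟩ * hb R α β n j ^ 2 * hb R α β n ⟨(j : ℕ) + 1, h⟩
            - hb R α β n j * hb R α β n ⟨(j : ℕ) + 1, h⟩ ^ 2 * hb R α β n j)
        + β • (hb R α β n ⟨(j : ℕ) + 1, h⟩ * hb R α β n j ^ 2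
            - hb R α β n ⟨(j : ℕ) + 1, h⟩ ^ 2 * hb R α β n j) := by
  set u := hb R α β n j with hu_def
  set v := hb R α β n ⟨(j : ℕ) + 1, h⟩ with hv_def
  have hcu : u ^ 3 = α • u ^ 2 + β • u + 1 := hb_cubic R α β n j
  have hcv : v ^ 3 = α • v ^ 2 + β • v + 1 := hb_cubic R α β n _
  have hbr : u * v * u = v * u * v := hb_braid R α β n j _ rfl
  set ui := u ^ 2 - α • u - β • (1 : CubicHecke R α β n) with hui_def
  set vi := v ^ 2 - α • v - β • (1 : CubicHecke R α β n) with hvi_def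
  have hu1 : u * ui = 1 := by
    have e : u * ui = u ^ 3 - α • u ^ 2 - β • u := by
      rw [hui_def, mul_sub, mul_sub, mul_smul_comm, mul_smul_comm, mul_one,
        ← pow_succ', ← pow_two]
    rw [e, hcu]; abel
  have h1u : ui * u = 1 := by
    have e : ui * u = u ^ 3 - α • u ^ 2 - β • u := by
      rw [hui_def, sub_mul, sub_mul, smul_mul_assoc, smul_mul_assoc, one_mul,
        ← pow_succ, ← pow_two]
    rw [e, hcu]; abel
  have hv1 : v * vi = 1 := by
    have e : v * vi = v ^ 3 - α • v ^ 2 - β • v := by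
      rw [hvi_def, mul_sub, mul_sub, mul_smul_comm, mul_smul_comm, mul_one,
        ← pow_succ', ← pow_two]
    rw [e, hcv]; abel
  have h1v : vi * v = 1 := by
    have e : vi * v = v ^ 3 - α • v ^ 2 - β • v := by
      rw [hvi_def, sub_mul, sub_mul, smul_mul_assoc, smul_mul_assoc, one_mul,
        ← pow_succ, ← pow_two]
    rw [e, hcv]; abel
  -- group identity: u * v * u^2 = v^2 * u * v
  have h2 : u * v * u ^ 2 = v ^ 2 * u * v := by
    calc u * v * u ^ 2 = (u * v * u) * u := by rw [pow_two]; noncomm_ring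
      _ = (v * u * v) * u := by rw [hbr]
      _ = v * (u * v * u) := by noncomm_ring
      _ = v * (v * u * v) := by rw [hbr]
      _ = v ^ 2 * u * v := by rw [pow_two]; noncomm_ring
  -- key: v * u^2 * vi = ui * v^2 * u
  have hkey : v * u ^ 2 * vi = ui * v ^ 2 * u := by
    have e : u * (v * u ^ 2 * vi) * v = u * (ui * v ^ 2 * u) * v := by
      calc u * (v * u ^ 2 * vi) * v = (u * v * u ^ 2) * (vi * v) := by noncomm_ring
        _ = v ^ 2 * u * v := by rw [h1v, h2, mul_one]
        _ = (u * ui) * (v ^ 2 * u * v) := by rw [hu1, one_mul]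
        _ = u * (ui * v ^ 2 * u) * v := by noncomm_ring
    calc v * u ^ 2 * vi = (ui * u) * (v * u ^ 2 * vi) * (v * vi) := by
          rw [h1u, hv1, one_mul, mul_one]
      _ = ui * (u * (v * u ^ 2 * vi) * v) * vi := by noncomm_ring
      _ = ui * (u * (ui * v ^ 2 * u) * v) * vi := by rw [e]
      _ = (ui * u) * (ui * v ^ 2 * u) * (v * vi) := by noncomm_ring
      _ = ui * v ^ 2 * u := by rw [h1u, hv1, one_mul, mul_one]
  have hv2 : v ^ 2 = vi + α • v + β • (1 : CubicHecke R α β n) := by rw [hvi_def]; abel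
  have hexp : v * u ^ 2 * v ^ 2
      = ui * v ^ 2 * u + α • (v * u ^ 2 * v) + β • (v * u ^ 2) := by
    conv_lhs => rw [hv2]
    rw [mul_add, mul_add, ← hkey, mul_smul_comm, mul_smul_comm, mul_one]
  rw [hexp, hui_def, sub_mul, sub_mul, sub_mul, sub_mul, smul_mul_assoc, smul_mul_assoc,
    smul_mul_assoc, smul_mul_assoc, one_mul, smul_sub, smul_sub]
  abel
end

section
/- Let R be a commutative ring and α, β ∈ R. In the cubic Hecke algebra H(Q,3) over R, set R₁ := b₁·R₀ and R₂ := b₁·R₁. Then: b₁R₀ = R₀b₁ = b₂R₀ = R₀b₂ = R₁; b₁R₁ = R₁b₁ = b₂R₁ = R₁b₂ = R₂; and b₁R₂ = R₂b₁ = b₂R₂ = R₂b₂ = R₀ + β·R₁ + α·R₂. -/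
variable (R : Type) [CommRing R]

set_option maxHeartbeats 2000000 in
theorem certA (R : Type) [CommRing R] {A : Type*} [Ring A] [Algebra R A] (α β : R)
    (x y : A)
    (hcx : x*x*x - α • (x*x) - β • x - 1 = 0)
    (hcy : y*y*y - α • (y*y) - β • y - 1 = 0)
    (hcb : y*x*y - x*y*x = 0) :
    R0elt R α β x y * x = x * R0elt R α β x y := by
  have key : R0elt R α β x y * x - x * R0elt R α β x y =
      (1) • ((y*x*y - x*y*x)*x*y)
      + (2*α - α*β^3 + 2*α^2*β) • ((x*x*x - α • (x*x) - β • x - 1)*y)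
      + (-1 - α*β - α^2*β^2 + α^3) • ((x*x*x - α • (x*x) - β • x - 1)*y*x)
      + (α*β^2 - α^2) • ((x*x*x - α • (x*x) - β • x - 1)*y*x*x)
      + (-1 + β^3 - 2*α*β) • ((x*x*x - α • (x*x) - β • x - 1)*y*y)
      + (β + α*β^2 - α^2) • ((x*x*x - α • (x*x) - β • x - 1)*y*y*x)
      + (-β^2 + α) • ((x*x*x - α • (x*x) - β • x - 1)*y*y*x*x)
      + (-α*β^2 + α^2) • (x*x*y*(x*x*x - α • (x*x) - β • x - 1))
      + (β^2 - α) • (x*x*y*y*(x*x*x - α • (x*x) - β • x - 1))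
      + (1 + α*β + α^2*β^2 - α^3) • (x*y*(x*x*x - α • (x*x) - β • x - 1))
      + (-β - α*β^2 + α^2) • (x*y*y*(x*x*x - α • (x*x) - β • x - 1))
      + (-2*α + α*β^3 - 2*α^2*β) • (y*(x*x*x - α • (x*x) - β • x - 1))
      + (-1) • (y*x*(y*x*y - x*y*x))
      + (1 - β^3 + 2*α*β) • (y*y*(x*x*x - α • (x*x) - β • x - 1)) := by
    simp only [R0elt, Algebra.algebraMap_eq_smul_one]
    simp only [mul_add, add_mul, mul_sub, sub_mul, smul_add, smul_sub, smul_smul,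
      smul_mul_assoc, mul_smul_comm, mul_assoc, mul_one, one_mul, pow_succ, pow_zero]
    match_scalars <;> ring
  simp only [hcx, hcy, hcb, mul_zero, zero_mul, smul_zero, add_zero, zero_add] at key
  exact sub_eq_zero.mp key

set_option maxHeartbeats 2000000 in
theorem certB (R : Type) [CommRing R] {A : Type*} [Ring A] [Algebra R A] (α β : R)
    (x y : A)
    (hcx : x*x*x - α • (x*x) - β • x - 1 = 0)
    (hcy : y*y*y - α • (y*y) - β • y - 1 = 0)
    (hcb : y*x*y - x*y*x = 0) :
    y * R0elt R α β x y = x * R0elt R α β x y := by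
  have key : y * R0elt R α β x y - x * R0elt R α β x y =
      (-α*β^2 + 3*α^2 - α^2*β^3 + 2*α^3*β) • ((y*x*y - x*y*x))
      + (-β^2 + β^5 - 3*α - 2*α*β^3 - 2*α^2*β - α^3*β^2 + α^4) • ((y*x*y - x*y*x)*x)
      + (1 + β^3 + α*β + α*β^4 - α^3) • ((y*x*y - x*y*x)*x*x)
      + (-β^4 + α*β^2) • ((y*x*y - x*y*x)*x*x*x)
      + (-β) • ((y*x*y - x*y*x)*x*x*y)
      + (1 - α*β + α*β^4 - 2*α^2*β^2) • ((y*x*y - x*y*x)*x*y)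
      + (α*β^2 + α^2*β^3 - α^3*β) • ((y*x*y - x*y*x)*x*y*x)
      + (-α*β^3 + α^2*β) • ((y*x*y - x*y*x)*x*y*x*x)
      + (-α) • ((y*x*y - x*y*x)*x*y*x*y)
      + (1) • ((y*x*y - x*y*x)*x*y*x*y*x)
      + (β - β^4 + 2*α*β^2) • ((y*x*y - x*y*x)*x*y*y)
      + (-β^2 - α*β^3 + α^2*β) • ((y*x*y - x*y*x)*x*y*y*x)
      + (β^3 - α*β) • ((y*x*y - x*y*x)*x*y*y*x*x)
      + (β^2 - 2*α + α*β^3 - 2*α^2*β) • ((y*x*y - x*y*x)*y)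
      + (1 + 2*α*β + α^2*β^2 - α^3) • ((y*x*y - x*y*x)*y*x)
      + (-β - α*β^2 + α^2) • ((y*x*y - x*y*x)*y*x*x)
      + (2*β - β^4 + 3*α*β^2 - α^2) • ((x*x*x - α • (x*x) - β • x - 1))
      + (2*α - α*β^3 + 2*α^2*β) • ((x*x*x - α • (x*x) - β • x - 1)*y)
      + (-1 - α*β - α^2*β^2 + α^3) • ((x*x*x - α • (x*x) - β • x - 1)*y*x)
      + (β - β^4 + 3*α*β^2 - α^2) • ((x*x*x - α • (x*x) - β • x - 1)*y*x*x)
      + (-β^2 - α*β^3 + α^2*β) • ((x*x*x - α • (x*x) - β • x - 1)*y*x*x*x)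
      + (β^3 - α*β) • ((x*x*x - α • (x*x) - β • x - 1)*y*x*x*x*x)
      + (2*α - α*β^3 + 2*α^2*β) • ((x*x*x - α • (x*x) - β • x - 1)*y*x*x*y)
      + (-α*β - α^2*β^2 + α^3) • ((x*x*x - α • (x*x) - β • x - 1)*y*x*x*y*x)
      + (α*β^2 - α^2) • ((x*x*x - α • (x*x) - β • x - 1)*y*x*x*y*x*x)
      + (-1 + β^3 - 2*α*β) • ((x*x*x - α • (x*x) - β • x - 1)*y*x*x*y*y)
      + (β + α*β^2 - α^2) • ((x*x*x - α • (x*x) - β • x - 1)*y*x*x*y*y*x)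
      + (-β^2 + α) • ((x*x*x - α • (x*x) - β • x - 1)*y*x*x*y*y*x*x)
      + (-1 + β^3 - 2*α*β) • ((x*x*x - α • (x*x) - β • x - 1)*y*y)
      + (β + α*β^2 - α^2) • ((x*x*x - α • (x*x) - β • x - 1)*y*y*x)
      + (-β^2 + α) • ((x*x*x - α • (x*x) - β • x - 1)*y*y*x*x)
      + (-2*β + β^4 - 3*α*β^2 + α^2) • ((y*y*y - α • (y*y) - β • y - 1))
      + (β^2 - 2*α + α*β^3 - 2*α^2*β) • ((y*y*y - α • (y*y) - β • y - 1)*x)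
      + (1 - β^3 + 2*α*β) • ((y*y*y - α • (y*y) - β • y - 1)*x*x)
      + (-2*α + α*β^3 - 2*α^2*β) • (x*(y*x*y - x*y*x))
      + (1 + α*β^4 - α^2*β^2 - α^3) • (x*(y*x*y - x*y*x)*x)
      + (α^2 + α^2*β^3 - α^3*β) • (x*(y*x*y - x*y*x)*x*x)
      + (-α*β^3 + α^2*β) • (x*(y*x*y - x*y*x)*x*x*x)
      + (-2*α^2 + α^2*β^3 - 2*α^3*β) • (x*(y*x*y - x*y*x)*x*y)
      + (α + α^2*β + α^3*β^2 - α^4) • (x*(y*x*y - x*y*x)*x*y*x)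
      + (-α^2*β^2 + α^3) • (x*(y*x*y - x*y*x)*x*y*x*x)
      + (α - α*β^3 + 2*α^2*β) • (x*(y*x*y - x*y*x)*x*y*y)
      + (-α*β - α^2*β^2 + α^3) • (x*(y*x*y - x*y*x)*x*y*y*x)
      + (α*β^2 - α^2) • (x*(y*x*y - x*y*x)*x*y*y*x*x)
      + (β - β^4 + 2*α*β^2) • (x*x*(y*x*y - x*y*x)*x)
      + (-β^2 - α*β^3 + α^2*β) • (x*x*(y*x*y - x*y*x)*x*x)
      + (β^3 - α*β) • (x*x*(y*x*y - x*y*x)*x*x*x)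
      + (2*α - α*β^3 + 2*α^2*β) • (x*x*(y*x*y - x*y*x)*x*y)
      + (-α*β - α^2*β^2 + α^3) • (x*x*(y*x*y - x*y*x)*x*y*x)
      + (α*β^2 - α^2) • (x*x*(y*x*y - x*y*x)*x*y*x*x)
      + (-1 + β^3 - 2*α*β) • (x*x*(y*x*y - x*y*x)*x*y*y)
      + (β + α*β^2 - α^2) • (x*x*(y*x*y - x*y*x)*x*y*y*x)
      + (-β^2 + α) • (x*x*(y*x*y - x*y*x)*x*y*y*x*x)
      + (-α*β^2 + α^2) • (x*x*y*(x*x*x - α • (x*x) - β • x - 1))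
      + (1 - β^3 + 2*α*β) • (x*x*y*(x*x*x - α • (x*x) - β • x - 1)*y*x)
      + (-β - α*β^2 + α^2) • (x*x*y*(x*x*x - α • (x*x) - β • x - 1)*y*x*x)
      + (β^2 - α) • (x*x*y*(x*x*x - α • (x*x) - β • x - 1)*y*x*x*x)
      + (-2*α + α*β^3 - 2*α^2*β) • (x*x*y*x*(y*x*y - x*y*x))
      + (α*β + α^2*β^2 - α^3) • (x*x*y*x*(y*x*y - x*y*x)*x)
      + (-α*β^2 + α^2) • (x*x*y*x*(y*x*y - x*y*x)*x*x)
      + (1 - β^3 + 2*α*β) • (x*x*y*x*(y*x*y - x*y*x)*y)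
      + (-β - α*β^2 + α^2) • (x*x*y*x*(y*x*y - x*y*x)*y*x)
      + (β^2 - α) • (x*x*y*x*(y*x*y - x*y*x)*y*x*x)
      + (1 - β^3 + 2*α*β) • (x*x*y*x*x*(y*x*y - x*y*x))
      + (-β - α*β^2 + α^2) • (x*x*y*x*x*(y*x*y - x*y*x)*x)
      + (β^2 - α) • (x*x*y*x*x*(y*x*y - x*y*x)*x*x)
      + (β^2 - α) • (x*x*y*y*(x*x*x - α • (x*x) - β • x - 1))
      + (1 + α*β + α^2*β^2 - α^3) • (x*y*(x*x*x - α • (x*x) - β • x - 1))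
      + (-β) • (x*y*(x*x*x - α • (x*x) - β • x - 1)*y)
      + (-2*α + α*β^3 - 2*α^2*β) • (x*y*(x*x*x - α • (x*x) - β • x - 1)*y*x)
      + (1 + α*β + α^2*β^2 - α^3) • (x*y*(x*x*x - α • (x*x) - β • x - 1)*y*x*x)
      + (-α*β^2 + α^2) • (x*y*(x*x*x - α • (x*x) - β • x - 1)*y*x*x*x)
      + (2*α^2 - α^2*β^3 + 2*α^3*β) • (x*y*x*(y*x*y - x*y*x))
      + (-α - α^2*β - α^3*β^2 + α^4) • (x*y*x*(y*x*y - x*y*x)*x)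
      + (α^2*β^2 - α^3) • (x*y*x*(y*x*y - x*y*x)*x*x)
      + (-α + α*β^3 - 2*α^2*β) • (x*y*x*(y*x*y - x*y*x)*y)
      + (α*β + α^2*β^2 - α^3) • (x*y*x*(y*x*y - x*y*x)*y*x)
      + (-α*β^2 + α^2) • (x*y*x*(y*x*y - x*y*x)*y*x*x)
      + (-2*α + α*β^3 - 2*α^2*β) • (x*y*x*x*(y*x*y - x*y*x))
      + (1 + α*β + α^2*β^2 - α^3) • (x*y*x*x*(y*x*y - x*y*x)*x)
      + (-α*β^2 + α^2) • (x*y*x*x*(y*x*y - x*y*x)*x*x)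
      + (-α*β^2 + α^2) • (x*y*y*(x*x*x - α • (x*x) - β • x - 1))
      + (-β^2) • (y*(x*x*x - α • (x*x) - β • x - 1))
      + (β^3 - α*β) • (y*(x*x*x - α • (x*x) - β • x - 1)*x)
      + (-β + β^4 - 2*α*β^2) • (y*(x*x*x - α • (x*x) - β • x - 1)*y*x)
      + (β^2 + α*β^3 - α^2*β) • (y*(x*x*x - α • (x*x) - β • x - 1)*y*x*x)
      + (-β^3 + α*β) • (y*(x*x*x - α • (x*x) - β • x - 1)*y*x*x*x)
      + (-1) • (y*(x*x*x - α • (x*x) - β • x - 1)*y*x*x*y)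
      + (-1 + α*β - α*β^4 + 2*α^2*β^2) • (y*x*(y*x*y - x*y*x))
      + (-α*β^2 - α^2*β^3 + α^3*β) • (y*x*(y*x*y - x*y*x)*x)
      + (α*β^3 - α^2*β) • (y*x*(y*x*y - x*y*x)*x*x)
      + (α) • (y*x*(y*x*y - x*y*x)*x*y)
      + (-1) • (y*x*(y*x*y - x*y*x)*x*y*x)
      + (-β + β^4 - 2*α*β^2) • (y*x*(y*x*y - x*y*x)*y)
      + (β^2 + α*β^3 - α^2*β) • (y*x*(y*x*y - x*y*x)*y*x)
      + (-β^3 + α*β) • (y*x*(y*x*y - x*y*x)*y*x*x)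
      + (-β + β^4 - 2*α*β^2) • (y*x*x*(y*x*y - x*y*x))
      + (β^2 + α*β^3 - α^2*β) • (y*x*x*(y*x*y - x*y*x)*x)
      + (-β^3 + α*β) • (y*x*x*(y*x*y - x*y*x)*x*x)
      + (-1) • (y*x*x*(y*x*y - x*y*x)*x*y)
      + (1) • (y*x*x*y*x*(y*x*y - x*y*x))
      + (-β^3 + α*β) • (y*y*(x*x*x - α • (x*x) - β • x - 1)) := by
    simp only [R0elt, Algebra.algebraMap_eq_smul_one]
    simp only [mul_add, add_mul, mul_sub, sub_mul, smul_add, smul_sub, smul_smul,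
      smul_mul_assoc, mul_smul_comm, mul_assoc, mul_one, one_mul, pow_succ, pow_zero]
    match_scalars <;> ring
  simp only [hcx, hcy, hcb, mul_zero, zero_mul, smul_zero, add_zero, zero_add] at key
  exact sub_eq_zero.mp key

set_option maxHeartbeats 2000000 in
theorem certC (R : Type) [CommRing R] {A : Type*} [Ring A] [Algebra R A] (α β : R)
    (x y : A)
    (hcx : x*x*x - α • (x*x) - β • x - 1 = 0)
    (hcy : y*y*y - α • (y*y) - β • y - 1 = 0)
    (hcb : y*x*y - x*y*x = 0) :
    R0elt R α β x y * y = x * R0elt R α β x y := by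
  have key : R0elt R α β x y * y - x * R0elt R α β x y =
      (-α*β^2 + 3*α^2 - α^2*β^3 + 2*α^3*β) • ((y*x*y - x*y*x))
      + (-2*α + α*β^3 - 2*α^2*β) • ((y*x*y - x*y*x)*x)
      + (-β + β^4 - 2*α*β^2) • ((y*x*y - x*y*x)*x*x*y)
      + (-α*β) • ((y*x*y - x*y*x)*x*y)
      + (-α + α*β^3 - 2*α^2*β) • ((y*x*y - x*y*x)*x*y*x*y)
      + (1 - β^3 + 2*α*β) • ((y*x*y - x*y*x)*x*y*x*y*x)
      + (β) • ((y*x*y - x*y*x)*x*y*y)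
      + (2*β - β^4 + 3*α*β^2 - α^2) • ((x*x*x - α • (x*x) - β • x - 1))
      + (β^3 - α*β) • ((x*x*x - α • (x*x) - β • x - 1)*x*y)
      + (-β^2 + 2*α - α*β^3 + 2*α^2*β) • ((x*x*x - α • (x*x) - β • x - 1)*y)
      + (2*α - α*β^3 + 2*α^2*β) • ((x*x*x - α • (x*x) - β • x - 1)*y*x*x*y)
      + (-1) • ((x*x*x - α • (x*x) - β • x - 1)*y*x*x*y*y)
      + (-1 - α*β) • ((x*x*x - α • (x*x) - β • x - 1)*y*y)
      + (β) • ((x*x*x - α • (x*x) - β • x - 1)*y*y*x)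
      + (-2*β + β^4 - 3*α*β^2 + α^2) • ((y*y*y - α • (y*y) - β • y - 1))
      + (-β^2 + β^5 - 3*α - 2*α*β^3 - 2*α^2*β - α^3*β^2 + α^4) • (x*(y*x*y - x*y*x))
      + (1 + α*β^4 - α^2*β^2 - α^3) • (x*(y*x*y - x*y*x)*x)
      + (β - β^4 + 2*α*β^2) • (x*(y*x*y - x*y*x)*x*x)
      + (β^2 + α*β^3 - α^2*β) • (x*(y*x*y - x*y*x)*x*x*y)
      + (-2*α^2 + α^2*β^3 - 2*α^3*β) • (x*(y*x*y - x*y*x)*x*y)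
      + (α - α*β^3 + 2*α^2*β) • (x*(y*x*y - x*y*x)*x*y*x)
      + (α*β + α^2*β^2 - α^3) • (x*(y*x*y - x*y*x)*x*y*x*y)
      + (-β - α*β^2 + α^2) • (x*(y*x*y - x*y*x)*x*y*x*y*x)
      + (α) • (x*(y*x*y - x*y*x)*x*y*y)
      + (-α*β - α^2*β^2 + α^3) • (x*(x*x*x - α • (x*x) - β • x - 1)*y*x*x*y)
      + (β^2 - 2*α + α*β^3 - 2*α^2*β) • (x*(y*y*y - α • (y*y) - β • y - 1))
      + (1 + β^3 + α*β + α*β^4 - α^3) • (x*x*(y*x*y - x*y*x))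
      + (α^2 + α^2*β^3 - α^3*β) • (x*x*(y*x*y - x*y*x)*x)
      + (-β^2 - α*β^3 + α^2*β) • (x*x*(y*x*y - x*y*x)*x*x)
      + (-β^3 + α*β) • (x*x*(y*x*y - x*y*x)*x*x*y)
      + (2*α - α*β^3 + 3*α^2*β + α^3*β^2 - α^4) • (x*x*(y*x*y - x*y*x)*x*y)
      + (-α*β - α^2*β^2 + α^3) • (x*x*(y*x*y - x*y*x)*x*y*x)
      + (-α*β^2 + α^2) • (x*x*(y*x*y - x*y*x)*x*y*x*y)
      + (β^2 - α) • (x*x*(y*x*y - x*y*x)*x*y*x*y*x)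
      + (-1) • (x*x*(y*x*y - x*y*x)*x*y*y)
      + (α*β^2 - α^2) • (x*x*(x*x*x - α • (x*x) - β • x - 1)*y*x*x*y)
      + (1 - β^3 + 2*α*β) • (x*x*(y*y*y - α • (y*y) - β • y - 1))
      + (-β^4 + α*β^2) • (x*x*x*(y*x*y - x*y*x))
      + (-α*β^3 + α^2*β) • (x*x*x*(y*x*y - x*y*x)*x)
      + (β^3 - α*β) • (x*x*x*(y*x*y - x*y*x)*x*x)
      + (-α*β - 2*α^2*β^2 + 2*α^3) • (x*x*x*(y*x*y - x*y*x)*x*y)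
      + (α*β^2 - α^2) • (x*x*x*(y*x*y - x*y*x)*x*y*x)
      + (α*β^2 - α^2) • (x*x*x*x*(y*x*y - x*y*x)*x*y)
      + (β^3 - α*β) • (x*x*x*x*y*(x*x*x - α • (x*x) - β • x - 1))
      + (-α*β^2 + α^2) • (x*x*x*x*y*x*(y*x*y - x*y*x))
      + (-β^2 - α*β^3 + α^2*β) • (x*x*x*y*(x*x*x - α • (x*x) - β • x - 1))
      + (-β^3 + α*β) • (x*x*x*y*(x*x*x - α • (x*x) - β • x - 1)*y)
      + (-α*β^2 + α^2) • (x*x*x*y*(x*x*x - α • (x*x) - β • x - 1)*y*x)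
      + (β^2 - α) • (x*x*x*y*(x*x*x - α • (x*x) - β • x - 1)*y*x*x)
      + (α*β + 2*α^2*β^2 - 2*α^3) • (x*x*x*y*x*(y*x*y - x*y*x))
      + (-α*β^2 + α^2) • (x*x*x*y*x*(y*x*y - x*y*x)*x)
      + (-α*β^2 + α^2) • (x*x*x*y*x*x*(y*x*y - x*y*x))
      + (β^2 - α) • (x*x*x*y*x*x*(y*x*y - x*y*x)*x)
      + (-β - α*β^2 + α^2) • (x*x*y*(y*x*y - x*y*x))
      + (β - β^4 + 2*α*β^2) • (x*x*y*(x*x*x - α • (x*x) - β • x - 1))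
      + (β^2 + α*β^3 - α^2*β) • (x*x*y*(x*x*x - α • (x*x) - β • x - 1)*y)
      + (1 + α*β + α^2*β^2 - α^3) • (x*x*y*(x*x*x - α • (x*x) - β • x - 1)*y*x)
      + (-β - α*β^2 + α^2) • (x*x*y*(x*x*x - α • (x*x) - β • x - 1)*y*x*x)
      + (-β^2 + α) • (x*x*y*(x*x*x - α • (x*x) - β • x - 1)*y*x*x*y)
      + (-2*α + α*β^3 - 3*α^2*β - α^3*β^2 + α^4) • (x*x*y*x*(y*x*y - x*y*x))
      + (α*β + α^2*β^2 - α^3) • (x*x*y*x*(y*x*y - x*y*x)*x)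
      + (α*β^2 - α^2) • (x*x*y*x*(y*x*y - x*y*x)*x*y)
      + (-β^2 + α) • (x*x*y*x*(y*x*y - x*y*x)*x*y*x)
      + (1) • (x*x*y*x*(y*x*y - x*y*x)*y)
      + (1 + α*β + α^2*β^2 - α^3) • (x*x*y*x*x*(y*x*y - x*y*x))
      + (-β - α*β^2 + α^2) • (x*x*y*x*x*(y*x*y - x*y*x)*x)
      + (-β^2 + α) • (x*x*y*x*x*(y*x*y - x*y*x)*x*y)
      + (β^2 - α) • (x*x*y*x*x*y*x*(y*x*y - x*y*x))
      + (1 + 2*α*β + α^2*β^2 - α^3) • (x*y*(y*x*y - x*y*x))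
      + (-β + β^4 - 2*α*β^2) • (x*y*(x*x*x - α • (x*x) - β • x - 1)*y)
      + (-2*α + α*β^3 - 2*α^2*β) • (x*y*(x*x*x - α • (x*x) - β • x - 1)*y*x)
      + (1 - β^3 + 2*α*β) • (x*y*(x*x*x - α • (x*x) - β • x - 1)*y*x*x)
      + (β + α*β^2 - α^2) • (x*y*(x*x*x - α • (x*x) - β • x - 1)*y*x*x*y)
      + (2*α^2 - α^2*β^3 + 2*α^3*β) • (x*y*x*(y*x*y - x*y*x))
      + (-α + α*β^3 - 2*α^2*β) • (x*y*x*(y*x*y - x*y*x)*x)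
      + (-α*β - α^2*β^2 + α^3) • (x*y*x*(y*x*y - x*y*x)*x*y)
      + (β + α*β^2 - α^2) • (x*y*x*(y*x*y - x*y*x)*x*y*x)
      + (-α) • (x*y*x*(y*x*y - x*y*x)*y)
      + (-2*α + α*β^3 - 2*α^2*β) • (x*y*x*x*(y*x*y - x*y*x))
      + (1 - β^3 + 2*α*β) • (x*y*x*x*(y*x*y - x*y*x)*x)
      + (β + α*β^2 - α^2) • (x*y*x*x*(y*x*y - x*y*x)*x*y)
      + (-β - α*β^2 + α^2) • (x*y*x*x*y*x*(y*x*y - x*y*x))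
      + (β^2 - 2*α + α*β^3 - 2*α^2*β) • (y*(y*x*y - x*y*x))
      + (-β) • (y*(x*x*x - α • (x*x) - β • x - 1)*y*x)
      + (-1 + β^3 - 2*α*β) • (y*(x*x*x - α • (x*x) - β • x - 1)*y*x*x*y)
      + (α*β) • (y*x*(y*x*y - x*y*x))
      + (α - α*β^3 + 2*α^2*β) • (y*x*(y*x*y - x*y*x)*x*y)
      + (-1 + β^3 - 2*α*β) • (y*x*(y*x*y - x*y*x)*x*y*x)
      + (-β) • (y*x*(y*x*y - x*y*x)*y)
      + (-β) • (y*x*x*(y*x*y - x*y*x))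
      + (-1 + β^3 - 2*α*β) • (y*x*x*(y*x*y - x*y*x)*x*y)
      + (1 - β^3 + 2*α*β) • (y*x*x*y*x*(y*x*y - x*y*x)) := by
    simp only [R0elt, Algebra.algebraMap_eq_smul_one]
    simp only [mul_add, add_mul, mul_sub, sub_mul, smul_add, smul_sub, smul_smul,
      smul_mul_assoc, mul_smul_comm, mul_assoc, mul_one, one_mul, pow_succ, pow_zero]
    match_scalars <;> ring
  simp only [hcx, hcy, hcb, mul_zero, zero_mul, smul_zero, add_zero, zero_add] at key
  exact sub_eq_zero.mp key

theorem hecke_cubic (R : Type) [CommRing R] (α β : R) (n : ℕ) (i : Fin (n - 1)) :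
    hb R α β n i ^ 3 = α • hb R α β n i ^ 2 + β • hb R α β n i + 1 := by
  have h := RingQuot.mkAlgHom_rel R (cubicRel.cube (R := R) (α := α) (β := β) (n := n) i)
  simp only [map_add, map_smul, map_pow, map_one] at h
  simpa only [hb] using h

theorem braid_gen_rel_s4 :
    (braidGen 3 ⟨0, by decide⟩ : BraidGroup 3) * braidGen 3 ⟨1, by decide⟩ * braidGen 3 ⟨0, by decide⟩
      = braidGen 3 ⟨1, by decide⟩ * braidGen 3 ⟨0, by decide⟩ * braidGen 3 ⟨1, by decide⟩ := by
  have h := braid_mk_eq_one (m := 3 - 1)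
    (r := FreeGroup.of ⟨0, by decide⟩ * FreeGroup.of ⟨1, by decide⟩ * FreeGroup.of ⟨0, by decide⟩ *
      (FreeGroup.of ⟨1, by decide⟩ * FreeGroup.of ⟨0, by decide⟩ * FreeGroup.of ⟨1, by decide⟩)⁻¹)
    (Or.inr ⟨⟨0, by decide⟩, ⟨1, by decide⟩, rfl, rfl⟩)
  simp only [map_mul, map_inv] at h
  exact mul_inv_eq_one.mp h

theorem hecke_braid (R : Type) [CommRing R] (α β : R) :
    hb R α β 3 ⟨0, by decide⟩ * hb R α β 3 ⟨1, by decide⟩ * hb R α β 3 ⟨0, by decide⟩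
      = hb R α β 3 ⟨1, by decide⟩ * hb R α β 3 ⟨0, by decide⟩ * hb R α β 3 ⟨1, by decide⟩ := by
  have h2 : gb R 3 ⟨0, by decide⟩ * gb R 3 ⟨1, by decide⟩ * gb R 3 ⟨0, by decide⟩
      = gb R 3 ⟨1, by decide⟩ * gb R 3 ⟨0, by decide⟩ * gb R 3 ⟨1, by decide⟩ := by
    simp only [gb, ← map_mul, braid_gen_rel_s4]
  simp only [hb, ← map_mul, h2]

/-- In `H(Q_{α,β},3)`, with `R₁ := b₁·R₀` and `R₂ := b₁·R₁`:
`b₁R₀ = R₀b₁ = b₂R₀ = R₀b₂ = R₁`, `b₁R₁ = R₁b₁ = b₂R₁ = R₁b₂ = R₂` and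
`b₁R₂ = R₂b₁ = b₂R₂ = R₂b₂ = R₀ + β·R₁ + α·R₂`. -/
theorem statement_4 (R : Type) [CommRing R] (α β : R) :
    ∀ x y r0 r1 r2 : CubicHecke R α β 3,
      x = hb R α β 3 ⟨0, by omega⟩ → y = hb R α β 3 ⟨1, by omega⟩ →
      r0 = R0elt R α β x y → r1 = x * r0 → r2 = x * r1 →
      (x * r0 = r1 ∧ r0 * x = r1 ∧ y * r0 = r1 ∧ r0 * y = r1) ∧
      (x * r1 = r2 ∧ r1 * x = r2 ∧ y * r1 = r2 ∧ r1 * y = r2) ∧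
      (x * r2 = r0 + β • r1 + α • r2 ∧ r2 * x = r0 + β • r1 + α • r2 ∧
        y * r2 = r0 + β • r1 + α • r2 ∧ r2 * y = r0 + β • r1 + α • r2) := by
  intro x y r0 r1 r2 hx0 hy0 h0 h1 h2
  have hx : x ^ 3 = α • x ^ 2 + β • x + 1 := by rw [hx0]; exact hecke_cubic R α β 3 _
  have hy : y ^ 3 = α • y ^ 2 + β • y + 1 := by rw [hy0]; exact hecke_cubic R α β 3 _
  have hbr : x * y * x = y * x * y := by rw [hx0, hy0]; exact hecke_braid R α β
  rw [pow_succ, pow_succ, pow_one] at hx hy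
  have hcx : x*x*x - α • (x*x) - β • x - 1 = 0 := by rw [hx]; module
  have hcy : y*y*y - α • (y*y) - β • y - 1 = 0 := by rw [hy]; module
  have hcb : y*x*y - x*y*x = 0 := sub_eq_zero_of_eq hbr.symm
  have hA : r0 * x = x * r0 := by rw [h0]; exact certA R α β x y hcx hcy hcb
  have hB : y * r0 = x * r0 := by rw [h0]; exact certB R α β x y hcx hcy hcb
  have hC : r0 * y = x * r0 := by rw [h0]; exact certC R α β x y hcx hcy hcb
  subst h1 h2
  have e2 : x * (x * r0) = r0 * (x * x) := by
    rw [← hA, ← mul_assoc, ← hA, mul_assoc]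
  have hcube : x * (x * (x * r0)) = r0 + β • (x * r0) + α • (x * (x * r0)) := by
    have h := congrArg (· * r0) hx
    simp only [add_mul, smul_mul_assoc, one_mul, mul_assoc] at h
    rw [h]; module
  refine ⟨⟨rfl, ?_, ?_, ?_⟩, ⟨rfl, ?_, ?_, ?_⟩, ?_, ?_, ?_, ?_⟩
  · rw [hA]
  · rw [hB]
  · rw [hC]
  · rw [mul_assoc, hA]
  · rw [← hA, ← mul_assoc, hB, mul_assoc, hA]
  · rw [mul_assoc, hC]
  · exact hcube
  · rw [mul_assoc, mul_assoc, hA]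
    exact hcube
  · rw [e2, ← mul_assoc, hB, mul_assoc, ← e2]
    exact hcube
  · rw [mul_assoc, mul_assoc, hC]
    exact hcube
end
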